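/- Let A = [[B_c E_c, 0, B_r R, 0, B_g, B_j], [0, D_l 𝓡_l, D_r, D_u, D_g G, 0]] where B, D are reduced loop/cutset matrices (split conformally) with B D^T = 0, R and G positive definite, and E_c, 𝓡_l nonsingular. Then any vector (u, v, w, x, y, z) in the kernel of A satisfies w = 0 and y = 0. -/

import Mathlib

open Matrix

/-- Key step in Theorem 3.3: any kernel vector (u, v, w, x, y, z) of
A = [[B_c E_c, 0, B_r R, 0, B_g, B_j], [0, D_l 𝓡_l, D_r, D_u, D_g G, 0]]
satisfies w = 0 and y = 0. -/
theorem kernel_of_A_w_y_vanish {p t nm nc nr nu nw nl ng nj : ℕ}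
    (Bm : Matrix (Fin p) (Fin nm) ℝ) (Bc : Matrix (Fin p) (Fin nc) ℝ)
    (Br : Matrix (Fin p) (Fin nr) ℝ) (Bu : Matrix (Fin p) (Fin nu) ℝ)
    (Bw : Matrix (Fin p) (Fin nw) ℝ) (Bl : Matrix (Fin p) (Fin nl) ℝ)
    (Bg : Matrix (Fin p) (Fin ng) ℝ) (Bj : Matrix (Fin p) (Fin nj) ℝ)
    (Dm : Matrix (Fin t) (Fin nm) ℝ) (Dc : Matrix (Fin t) (Fin nc) ℝ)
    (Dr : Matrix (Fin t) (Fin nr) ℝ) (Du : Matrix (Fin t) (Fin nu) ℝ)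
    (Dw : Matrix (Fin t) (Fin nw) ℝ) (Dl : Matrix (Fin t) (Fin nl) ℝ)
    (Dg : Matrix (Fin t) (Fin ng) ℝ) (Dj : Matrix (Fin t) (Fin nj) ℝ)
    (R : Matrix (Fin nr) (Fin nr) ℝ) (G : Matrix (Fin ng) (Fin ng) ℝ)
    (Ec : Matrix (Fin nc) (Fin nc) ℝ) (Rl : Matrix (Fin nl) (Fin nl) ℝ)
    (hBD : (Matrix.fromCols Bm (Matrix.fromCols Bc (Matrix.fromCols Br
      (Matrix.fromCols Bu (Matrix.fromCols Bw (Matrix.fromCols Bl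
        (Matrix.fromCols Bg Bj))))))) * (Matrix.fromCols Dm (Matrix.fromCols Dc (Matrix.fromCols Dr
      (Matrix.fromCols Du (Matrix.fromCols Dw (Matrix.fromCols Dl
        (Matrix.fromCols Dg Dj)))))))ᵀ = 0)
    (hkerB : LinearMap.ker (Matrix.fromCols Bm (Matrix.fromCols Bc (Matrix.fromCols Br
      (Matrix.fromCols Bu (Matrix.fromCols Bw (Matrix.fromCols Bl
        (Matrix.fromCols Bg Bj))))))).mulVecLin
        = LinearMap.range ((Matrix.fromCols Dm (Matrix.fromCols Dc (Matrix.fromCols Dr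
      (Matrix.fromCols Du (Matrix.fromCols Dw (Matrix.fromCols Dl
        (Matrix.fromCols Dg Dj)))))))ᵀ).mulVecLin)
    (hkerD : LinearMap.ker (Matrix.fromCols Dm (Matrix.fromCols Dc (Matrix.fromCols Dr
      (Matrix.fromCols Du (Matrix.fromCols Dw (Matrix.fromCols Dl
        (Matrix.fromCols Dg Dj))))))).mulVecLin
        = LinearMap.range ((Matrix.fromCols Bm (Matrix.fromCols Bc (Matrix.fromCols Br
      (Matrix.fromCols Bu (Matrix.fromCols Bw (Matrix.fromCols Bl
        (Matrix.fromCols Bg Bj)))))))ᵀ).mulVecLin)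
    (hR : ∀ u : Fin nr → ℝ, u ≠ 0 → 0 < u ⬝ᵥ R.mulVec u)
    (hG : ∀ u : Fin ng → ℝ, u ≠ 0 → 0 < u ⬝ᵥ G.mulVec u)
    (hEc : Ec.det ≠ 0) (hRl : Rl.det ≠ 0)
    :
    ∀ (u : Fin nc → ℝ) (v : Fin nl → ℝ) (w : Fin nr → ℝ) (x : Fin nu → ℝ)
      (y : Fin ng → ℝ) (z : Fin nj → ℝ),
      (Matrix.fromRows
      (Matrix.fromCols (Bc * Ec) (Matrix.fromCols (0 : Matrix (Fin p) (Fin nl) ℝ)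
        (Matrix.fromCols (Br * R) (Matrix.fromCols (0 : Matrix (Fin p) (Fin nu) ℝ)
          (Matrix.fromCols Bg Bj)))))
      (Matrix.fromCols (0 : Matrix (Fin t) (Fin nc) ℝ)
        (Matrix.fromCols (Dl * Rl) (Matrix.fromCols Dr
          (Matrix.fromCols Du (Matrix.fromCols (Dg * G)
            (0 : Matrix (Fin t) (Fin nj) ℝ))))))).mulVec
        (Sum.elim u (Sum.elim v (Sum.elim w (Sum.elim x (Sum.elim y z))))) = 0 →
      w = 0 ∧ y = 0 := by
  intro u v w x y z h
  rw [Matrix.fromRows_mulVec] at h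
  have h1 := congrArg (fun f => f ∘ Sum.inl) h
  have h2 := congrArg (fun f => f ∘ Sum.inr) h
  simp only [Sum.elim_comp_inl, Sum.elim_comp_inr] at h1 h2
  -- top block equation
  simp only [Matrix.fromCols_mulVec_sumElim, Matrix.zero_mulVec, add_zero, zero_add,
    Matrix.mulVec_mulVec] at h1 h2
  -- a : vector killed by B
  set a : (Fin nm ⊕ (Fin nc ⊕ (Fin nr ⊕ (Fin nu ⊕ (Fin nw ⊕ (Fin nl ⊕ (Fin ng ⊕ Fin nj))))))) → ℝ :=
    Sum.elim 0 (Sum.elim (Ec.mulVec u) (Sum.elim (R.mulVec w) (Sum.elim 0 (Sum.elim 0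
      (Sum.elim 0 (Sum.elim y z)))))) with ha
  set b : (Fin nm ⊕ (Fin nc ⊕ (Fin nr ⊕ (Fin nu ⊕ (Fin nw ⊕ (Fin nl ⊕ (Fin ng ⊕ Fin nj))))))) → ℝ :=
    Sum.elim 0 (Sum.elim 0 (Sum.elim w (Sum.elim x (Sum.elim 0
      (Sum.elim (Rl.mulVec v) (Sum.elim (G.mulVec y) 0)))))) with hb
  set B := Matrix.fromCols Bm (Matrix.fromCols Bc (Matrix.fromCols Br
      (Matrix.fromCols Bu (Matrix.fromCols Bw (Matrix.fromCols Bl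
        (Matrix.fromCols Bg Bj)))))) with hBdef
  set D := Matrix.fromCols Dm (Matrix.fromCols Dc (Matrix.fromCols Dr
      (Matrix.fromCols Du (Matrix.fromCols Dw (Matrix.fromCols Dl
        (Matrix.fromCols Dg Dj)))))) with hDdef
  have hBa : B.mulVec a = 0 := by
    rw [hBdef, ha]
    simp only [Matrix.fromCols_mulVec_sumElim, Matrix.mulVec_zero, add_zero, zero_add]
    simpa [Matrix.mulVec_mulVec, Function.comp, add_comm, add_left_comm, add_assoc] using h1
  have hDb : D.mulVec b = 0 := by
    rw [hDdef, hb]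
    simp only [Matrix.fromCols_mulVec_sumElim, Matrix.mulVec_zero, add_zero, zero_add]
    simpa [Matrix.mulVec_mulVec, Function.comp, add_comm, add_left_comm, add_assoc] using h2
  have haMem : a ∈ LinearMap.range (Dᵀ).mulVecLin := by
    rw [← hkerB]; exact hBa
  have hbMem : b ∈ LinearMap.range (Bᵀ).mulVecLin := by
    rw [← hkerD]; exact hDb
  obtain ⟨s, hs⟩ := haMem
  obtain ⟨r, hr⟩ := hbMem
  have hdot : a ⬝ᵥ b = 0 := by
    rw [← hs, ← hr]
    simp only [Matrix.mulVecLin_apply]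
    rw [Matrix.mulVec_transpose, ← Matrix.dotProduct_mulVec, Matrix.mulVec_mulVec]
    have : B * Dᵀ = 0 := hBD
    have hDB : D * Bᵀ = 0 := by
      have := congrArg Matrix.transpose this
      simpa [Matrix.transpose_mul] using this
    rw [hDB, Matrix.zero_mulVec, dotProduct_zero]
  have hdot2 : (R.mulVec w) ⬝ᵥ w + y ⬝ᵥ (G.mulVec y) = 0 := by
    rw [ha, hb] at hdot
    simpa [sumElim_dotProduct_sumElim] using hdot
  have hw : w = 0 := by
    by_contra hw
    have h1 := hR w hw
    have h2 : 0 ≤ y ⬝ᵥ G.mulVec y := by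
      by_cases hy : y = 0
      · simp [hy]
      · exact le_of_lt (hG y hy)
    rw [dotProduct_comm] at hdot2
    linarith
  have hy : y = 0 := by
    by_contra hy
    have h1 := hG y hy
    have h2 : 0 ≤ (R.mulVec w) ⬝ᵥ w := by simp [hw]
    linarith
  exact ⟨hw, hy⟩
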